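/- Let X and Y be separable metrizable spaces and f : X → Y a function. The following are equivalent: (i) f ∈ dec(Σ^0_1, Δ^0_3); (ii) there is a countable family (A_n) of Σ^0_3 subsets of X with X = ⋃_n A_n such that each restriction f↾A_n is continuous; (iii) there is a countable family (A_n) of Σ^0_3 subsets of X with X = ⋃_n A_n such that each restriction f↾A_n ∈ dec(Σ^0_1, Δ^0_3) (relative to A_n). -/

import Mathlib

open Set Topology

/-- A set is `Σ⁰₂` (Fσ) if it is a countable union of closed sets. -/
def IsFsigma {X : Type*} [TopologicalSpace X] (A : Set X) : Prop :=
  ∃ F : ℕ → Set X, (∀ n, IsClosed (F n)) ∧ A = ⋃ n, F n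

/-- A set is `Σ⁰₃` if it is a countable union of Gδ sets. -/
def IsSigma03 {X : Type*} [TopologicalSpace X] (A : Set X) : Prop :=
  ∃ G : ℕ → Set X, (∀ n, IsGδ (G n)) ∧ A = ⋃ n, G n

/-- A set is `Δ⁰₃` if both it and its complement are `Σ⁰₃`. -/
def IsDelta03 {X : Type*} [TopologicalSpace X] (A : Set X) : Prop :=
  IsSigma03 A ∧ IsSigma03 Aᶜ

/-- `Σ⁰₂`-measurable function: preimages of open sets are Fσ. -/
def Sigma2Measurable {X Y : Type*} [TopologicalSpace X] [TopologicalSpace Y]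
    (f : X → Y) : Prop :=
  ∀ U : Set Y, IsOpen U → IsFsigma (f ⁻¹' U)

/-- `Σ⁰₃`-measurable function: preimages of open sets are `Σ⁰₃`. -/
def Sigma3Measurable {X Y : Type*} [TopologicalSpace X] [TopologicalSpace Y]
    (f : X → Y) : Prop :=
  ∀ U : Set Y, IsOpen U → IsSigma03 (f ⁻¹' U)

/-- `f ∈ dec(Σ⁰₂, Δ⁰₃)`: there is a countable partition of the domain into `Δ⁰₃` pieces
on each of which `f` restricts (with the subspace topology) to a `Σ⁰₂`-measurable function. -/
def DecSigma2 {X Y : Type*} [TopologicalSpace X] [TopologicalSpace Y]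
    (f : X → Y) : Prop :=
  ∃ A : ℕ → Set X, (∀ m n, m ≠ n → Disjoint (A m) (A n)) ∧ (⋃ n, A n) = Set.univ ∧
    (∀ n, IsDelta03 (A n)) ∧ ∀ n, Sigma2Measurable ((A n).restrict f)

/-- `f ∈ dec(Σ⁰₁, Δ⁰₃)`: there is a countable partition of the domain into `Δ⁰₃` pieces
on each of which `f` restricts (with the subspace topology) to a continuous function. -/
def DecCont {X Y : Type*} [TopologicalSpace X] [TopologicalSpace Y]
    (f : X → Y) : Prop :=
  ∃ A : ℕ → Set X, (∀ m n, m ≠ n → Disjoint (A m) (A n)) ∧ (⋃ n, A n) = Set.univ ∧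
    (∀ n, IsDelta03 (A n)) ∧ ∀ n, Continuous ((A n).restrict f)

section Aux

variable {X : Type*} [TopologicalSpace X]

lemma IsGδ.isSigma03 {s : Set X} (h : IsGδ s) : IsSigma03 s :=
  ⟨fun _ => s, fun _ => h, (iUnion_const s).symm⟩

lemma isSigma03_empty : IsSigma03 (∅ : Set X) := isOpen_empty.isGδ.isSigma03

lemma isSigma03_iUnion {S : ℕ → Set X} (h : ∀ n, IsSigma03 (S n)) :
    IsSigma03 (⋃ n, S n) := by
  choose G hGδ hGU using h
  let e : ℕ ≃ ℕ × ℕ := (Denumerable.eqv (ℕ × ℕ)).symm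
  refine ⟨fun k => G (e k).1 (e k).2, fun k => hGδ _ _, ?_⟩
  calc ⋃ n, S n = ⋃ n, ⋃ m, G n m := by simp_rw [hGU]
    _ = ⋃ p : ℕ × ℕ, G p.1 p.2 := (iUnion_prod' fun p => G p.1 p.2).symm
    _ = ⋃ k, G (e k).1 (e k).2 := (e.surjective.iUnion_comp _).symm

lemma IsSigma03.union {s t : Set X} (hs : IsSigma03 s) (ht : IsSigma03 t) :
    IsSigma03 (s ∪ t) := by
  obtain ⟨F, hF, rfl⟩ := hs
  obtain ⟨G, hG, rfl⟩ := ht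
  exact ⟨fun n => F n ∪ G n, fun n => (hF n).union (hG n),
    (iUnion_union_distrib F G).symm⟩

lemma IsSigma03.inter {s t : Set X} (hs : IsSigma03 s) (ht : IsSigma03 t) :
    IsSigma03 (s ∩ t) := by
  obtain ⟨F, hF, rfl⟩ := hs
  obtain ⟨G, hG, rfl⟩ := ht
  let e : ℕ ≃ ℕ × ℕ := (Denumerable.eqv (ℕ × ℕ)).symm
  refine ⟨fun k => F (e k).1 ∩ G (e k).2, fun k => (hF _).inter (hG _), ?_⟩
  calc (⋃ n, F n) ∩ ⋃ n, G n = ⋃ n, ⋃ m, F n ∩ G m := by ext x; simp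
    _ = ⋃ p : ℕ × ℕ, F p.1 ∩ G p.2 := (iUnion_prod' fun p => F p.1 ∩ G p.2).symm
    _ = ⋃ k, F (e k).1 ∩ G (e k).2 := (e.surjective.iUnion_comp _).symm

variable [TopologicalSpace.MetrizableSpace X]

lemma IsClosed.isSigma03 {s : Set X} (h : IsClosed s) : IsSigma03 s := by
  letI := TopologicalSpace.metrizableSpaceMetric X
  exact h.isGδ.isSigma03

lemma IsGδ.compl_isSigma03 {s : Set X} (h : IsGδ s) : IsSigma03 sᶜ := by
  obtain ⟨U, hU, rfl⟩ := h.eq_iInter_nat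
  rw [compl_iInter]
  exact isSigma03_iUnion fun n => (hU n).isClosed_compl.isSigma03

omit [TopologicalSpace.MetrizableSpace X] in
lemma isGδ_partialSups {H : ℕ → Set X} (h : ∀ n, IsGδ (H n)) (n : ℕ) :
    IsGδ (partialSups H n) := by
  induction n with
  | zero => rw [partialSups_zero]; exact h 0
  | succ n ih => rw [partialSups_add_one]; exact ih.union (h (n + 1))

lemma isDelta03_disjointed {H : ℕ → Set X} (h : ∀ n, IsGδ (H n)) (n : ℕ) :
    IsDelta03 (disjointed H n) := by
  cases n with
  | zero =>
    rw [disjointed_zero]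
    exact ⟨(h 0).isSigma03, (h 0).compl_isSigma03⟩
  | succ n =>
    rw [disjointed_add_one]
    have hW : IsGδ (partialSups H n : Set X) := isGδ_partialSups h n
    constructor
    · rw [Set.diff_eq]
      exact (h (n + 1)).isSigma03.inter hW.compl_isSigma03
    · rw [Set.diff_eq, compl_inter, compl_compl]
      exact (h (n + 1)).compl_isSigma03.union hW.isSigma03

end Aux

section Aux2

variable {X Y : Type*} [TopologicalSpace X] [TopologicalSpace Y]

lemma isGδ_of_subtype {A : Set X} {s : Set ↥A} (hs : IsGδ s) :
    ∃ T : Set X, IsGδ T ∧ s = Subtype.val ⁻¹' T := by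
  obtain ⟨U, hU, rfl⟩ := hs.eq_iInter_nat
  choose V hVo hV using fun n => isOpen_induced_iff.1 (hU n)
  refine ⟨⋂ n, V n, .iInter_of_isOpen hVo, ?_⟩
  rw [preimage_iInter]
  exact iInter_congr fun n => (hV n).symm

lemma isSigma03_image_val [TopologicalSpace.MetrizableSpace X]
    {A : Set X} (hA : IsSigma03 A) {s : Set ↥A} (hs : IsSigma03 s) :
    IsSigma03 (Subtype.val '' s) := by
  obtain ⟨G, hGδ, rfl⟩ := hs
  rw [image_iUnion]
  refine isSigma03_iUnion fun n => ?_
  obtain ⟨T, hT, hTs⟩ := isGδ_of_subtype (hGδ n)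
  rw [hTs, Subtype.image_preimage_coe]
  exact hA.inter hT.isSigma03

lemma continuousOn_image_val {f : X → Y} {A : Set X} {s : Set ↥A}
    (h : Continuous (s.restrict (A.restrict f))) :
    ContinuousOn f (Subtype.val '' s) := by
  rw [continuousOn_iff_continuous_restrict]
  have hsub : ∀ x : ↥(Subtype.val '' s), x.1 ∈ A := by
    rintro ⟨x, y, hy, rfl⟩; exact y.2
  have hmem : ∀ x : ↥(Subtype.val '' s), (⟨x.1, hsub x⟩ : ↥A) ∈ s := by
    rintro ⟨x, y, hy, rfl⟩
    simpa [Subtype.ext_iff] using hy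
  have key : (Subtype.val '' s).restrict f =
      (s.restrict (A.restrict f)) ∘ (fun x => ⟨⟨x.1, hsub x⟩, hmem x⟩) := rfl
  change Continuous ((Subtype.val '' s).restrict f)
  rw [key]
  exact h.comp ((continuous_subtype_val.subtype_mk _).subtype_mk _)

end Aux2

section Core

variable {X Y : Type*} [TopologicalSpace X] [TopologicalSpace Y]

lemma isDelta03_univ : IsDelta03 (Set.univ : Set X) :=
  ⟨isOpen_univ.isGδ.isSigma03, by rw [compl_univ]; exact isSigma03_empty⟩

lemma isDelta03_empty : IsDelta03 (∅ : Set X) :=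
  ⟨isSigma03_empty, by rw [compl_empty]; exact isOpen_univ.isGδ.isSigma03⟩

lemma DecCont.of_continuous {f : X → Y} (h : Continuous f) : DecCont f := by
  refine ⟨fun n => if n = 0 then univ else ∅, ?_, ?_, ?_,
    fun n => h.comp continuous_subtype_val⟩
  · rintro (_ | m) (_ | n) hmn <;> simp_all
  · rw [eq_univ_iff_forall]
    intro x
    exact mem_iUnion.2 ⟨0, by simp⟩
  · rintro (_ | n)
    · simpa using isDelta03_univ
    · simpa using isDelta03_empty

lemma decCont_core [TopologicalSpace.MetrizableSpace X] {f : X → Y}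
    (h : ∃ A : ℕ → Set X, (∀ n, IsSigma03 (A n)) ∧ (⋃ n, A n) = Set.univ ∧
      ∀ n, ContinuousOn f (A n)) : DecCont f := by
  obtain ⟨A, hA, hAU, hAc⟩ := h
  choose G hGδ hGU using hA
  let e : ℕ ≃ ℕ × ℕ := (Denumerable.eqv (ℕ × ℕ)).symm
  set H : ℕ → Set X := fun k => G (e k).1 (e k).2 with hH
  have hHδ : ∀ k, IsGδ (H k) := fun k => hGδ _ _
  have hHU : ⋃ k, H k = univ := by
    have h1 : ⋃ k, H k = ⋃ p : ℕ × ℕ, G p.1 p.2 :=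
      e.surjective.iUnion_comp fun p => G p.1 p.2
    rw [h1, iUnion_prod' fun p => G p.1 p.2, ← hAU]
    exact iUnion_congr fun n => (hGU n).symm
  have hHc : ∀ k, ContinuousOn f (H k) := fun k =>
    (hAc (e k).1).mono (by
      simp only [hH, hGU (e k).1]
      exact subset_iUnion (G (e k).1) (e k).2)
  refine ⟨disjointed H, ?_, ?_, isDelta03_disjointed hHδ, ?_⟩
  · exact fun m n hmn => disjoint_disjointed H hmn
  · rw [iUnion_disjointed, hHU]
  · exact fun n => ((hHc n).mono (disjointed_subset H n)).restrict

end Core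


/-- Proposition 2.1 for `dec(Σ⁰₁, Δ⁰₃)`: the three conditions are equivalent. -/
theorem stmt1 {X Y : Type*} [TopologicalSpace X] [TopologicalSpace.SeparableSpace X]
    [TopologicalSpace.MetrizableSpace X]
    [TopologicalSpace Y] [TopologicalSpace.SeparableSpace Y]
    [TopologicalSpace.MetrizableSpace Y] (f : X → Y) :
    (DecCont f ↔
      (∃ A : ℕ → Set X, (∀ n, IsSigma03 (A n)) ∧ (⋃ n, A n) = Set.univ ∧
        ∀ n, Continuous ((A n).restrict f))) ∧
    (DecCont f ↔
      (∃ A : ℕ → Set X, (∀ n, IsSigma03 (A n)) ∧ (⋃ n, A n) = Set.univ ∧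
        ∀ n, DecCont ((A n).restrict f))) := by
  constructor
  · constructor
    · rintro ⟨A, _, hU, hΔ, hc⟩
      exact ⟨A, fun n => (hΔ n).1, hU, hc⟩
    · rintro ⟨A, hS, hU, hc⟩
      exact decCont_core ⟨A, hS, hU, fun n => continuousOn_iff_continuous_restrict.2 (hc n)⟩
  · constructor
    · rintro ⟨A, _, hU, hΔ, hc⟩
      exact ⟨A, fun n => (hΔ n).1, hU, fun n => DecCont.of_continuous (hc n)⟩
    · rintro ⟨A, hS, hU, hc⟩
      choose B hBdisj hBU hBΔ hBc using hc
      let e : ℕ ≃ ℕ × ℕ := (Denumerable.eqv (ℕ × ℕ)).symm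
      refine decCont_core ⟨fun k => Subtype.val '' (B (e k).1 (e k).2),
        fun k => isSigma03_image_val (hS _) (hBΔ _ _).1, ?_,
        fun k => continuousOn_image_val (hBc _ _)⟩
      have h1 : ⋃ k, Subtype.val '' (B (e k).1 (e k).2)
          = ⋃ p : ℕ × ℕ, Subtype.val '' (B p.1 p.2) :=
        e.surjective.iUnion_comp fun p => Subtype.val '' (B p.1 p.2)
      rw [h1, iUnion_prod' fun p => Subtype.val '' (B p.1 p.2), ← hU]
      refine iUnion_congr fun n => ?_
      show ⋃ j, Subtype.val '' B n j = A n
      rw [← image_iUnion, hBU n, Subtype.coe_image_univ]
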